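/- For $2 \le T \le 4$, $\sup_{f \in \mathcal{L}_2(T)} \int_0^T |f'(t)|\, dt = T^2/2 - 2T + 4$, attained by $f(t) = -1 + (t-2)^2/2$. -/

import Mathlib

open Set MeasureTheory intervalIntegral

/-- Membership in Landau's class `𝓛₂(T)`. -/
def InL2 (T : ℝ) (f f' : ℝ → ℝ) : Prop :=
  (∀ t ∈ Icc 0 T, HasDerivWithinAt f (f' t) (Icc 0 T) t) ∧
  (∀ t ∈ Icc 0 T, |f t| ≤ 1) ∧
  LipschitzOnWith 1 f' (Icc 0 T)


private lemma integral_sub_const' (a b c : ℝ) :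
    (∫ t in a..b, (t - c)) = (b - c)^2/2 - (a - c)^2/2 := by
  have h1 : IntervalIntegrable (fun t : ℝ => t) volume a b :=
    continuous_id.intervalIntegrable _ _
  have h2 : IntervalIntegrable (fun _ : ℝ => c) volume a b := intervalIntegrable_const
  rw [intervalIntegral.integral_sub h1 h2, integral_id, intervalIntegral.integral_const, smul_eq_mul]
  ring

private lemma integral_const_sub' (a b c : ℝ) :
    (∫ t in a..b, (c - t)) = (c - a)^2/2 - (c - b)^2/2 := by
  have h : ∀ t : ℝ, c - t = -(t - c) := fun t => by ring
  simp_rw [h]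
  rw [intervalIntegral.integral_neg, integral_sub_const']
  ring

private lemma arith_ineq (T a L b A M B : ℝ) (ha : 0 ≤ a) (hL : 0 ≤ L) (hb : 0 ≤ b)
    (hsum : a + L + b = T) (hT2 : 2 ≤ T) (hT4 : T ≤ 4)
    (hA2 : A ≤ 2) (hAa : A ≤ a^2/2) (hM : M ≤ L^2/4) (hB2 : B ≤ 2) (hBb : B ≤ b^2/2) :
    A + M + B ≤ T^2/2 - 2*T + 4 := by
  rcases le_total a 2 with h1 | h1 <;> rcases le_total b 2 with h2 | h2
  · rcases le_total (a + b) 2 with h3 | h3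
    · nlinarith [sq_nonneg (L/2 + (a+b-2)), mul_nonneg ha hb,
        mul_nonneg (by linarith : (0:ℝ) ≤ 2 - a - b) (by linarith : (0:ℝ) ≤ a + b)]
    · nlinarith [sq_nonneg L, mul_nonneg hL (by linarith : (0:ℝ) ≤ a + b - 2),
        mul_nonneg (by linarith : (0:ℝ) ≤ 2 - a) (by linarith : (0:ℝ) ≤ 2 - b)]
  · -- a ≤ 2, b ≥ 2 : use A ≤ a²/2, M ≤ L²/4, B ≤ 2
    nlinarith [mul_nonneg ha hL, sq_nonneg L,
      mul_nonneg (by linarith : (0:ℝ) ≤ T - 2 - a - L) (by linarith : (0:ℝ) ≤ T - 2 + a + L)]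
  · nlinarith [mul_nonneg hb hL, sq_nonneg L,
      mul_nonneg (by linarith : (0:ℝ) ≤ T - 2 - b - L) (by linarith : (0:ℝ) ≤ T - 2 + b + L)]
  · have hL0 : L = 0 := le_antisymm (by linarith) hL
    have hT : T = 4 := le_antisymm hT4 (by linarith)
    subst hL0 hT
    norm_num at hM ⊢
    linarith

private lemma upper_bound (T : ℝ) (hT2 : 2 ≤ T) (hT4 : T ≤ 4) (f g : ℝ → ℝ)
    (hd : ∀ t ∈ Icc 0 T, HasDerivWithinAt f (g t) (Icc 0 T) t)
    (hbd : ∀ t ∈ Icc 0 T, |f t| ≤ 1)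
    (hl : LipschitzOnWith 1 g (Icc 0 T)) :
    (∫ t in (0:ℝ)..T, |g t|) ≤ T ^ 2 / 2 - 2 * T + 4 := by
  have hT0 : (0:ℝ) ≤ T := by linarith
  have hgc : ContinuousOn g (Icc 0 T) := hl.continuousOn
  have hfc : ContinuousOn f (Icc 0 T) := fun t ht => (hd t ht).continuousWithinAt
  have hlip : ∀ x ∈ Icc 0 T, ∀ y ∈ Icc (0:ℝ) T, |g x - g y| ≤ |x - y| := by
    intro x hx y hy
    have := hl.dist_le_mul x hx y hy
    simpa [Real.dist_eq] using this
  have hsub : ∀ a b : ℝ, a ∈ Icc 0 T → b ∈ Icc (0:ℝ) T → uIcc a b ⊆ Icc 0 T := by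
    intro a b ha hb
    have := uIcc_subset_uIcc (show a ∈ uIcc (0:ℝ) T by rwa [uIcc_of_le hT0])
      (show b ∈ uIcc (0:ℝ) T by rwa [uIcc_of_le hT0])
    rwa [uIcc_of_le hT0] at this
  have hgint : ∀ a b : ℝ, a ∈ Icc 0 T → b ∈ Icc (0:ℝ) T → IntervalIntegrable g volume a b :=
    fun a b ha hb => (hgc.mono (hsub a b ha hb)).intervalIntegrable
  have habsint : ∀ a b : ℝ, a ∈ Icc 0 T → b ∈ Icc (0:ℝ) T →
      IntervalIntegrable (fun t => |g t|) volume a b :=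
    fun a b ha hb => ((hgc.mono (hsub a b ha hb)).abs).intervalIntegrable
  have hftc : ∀ a b : ℝ, a ∈ Icc 0 T → b ∈ Icc (0:ℝ) T → a ≤ b →
      (∫ t in a..b, g t) = f b - f a := by
    intro a b ha hb hab
    apply intervalIntegral.integral_eq_sub_of_hasDeriv_right_of_le hab
      (hfc.mono (Icc_subset_Icc ha.1 hb.2))
    · intro x hx
      have hx' : x ∈ Ioo (0:ℝ) T := ⟨lt_of_le_of_lt ha.1 hx.1, lt_of_lt_of_le hx.2 hb.2⟩
      exact ((hd x (Ioo_subset_Icc_self hx')).hasDerivAt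
        (Icc_mem_nhds hx'.1 hx'.2)).hasDerivWithinAt
    · exact hgint a b ha hb
  have hivt : ∀ s t : ℝ, s ∈ Icc 0 T → t ∈ Icc (0:ℝ) T → g s < 0 → 0 < g t →
      ∃ c ∈ uIcc s t, g c = 0 := by
    intro s t hs ht hgs hgt
    have hc : ContinuousOn g (uIcc s t) := hgc.mono (hsub s t hs ht)
    have h0 : (0:ℝ) ∈ uIcc (g s) (g t) := by
      rw [mem_uIcc]; left; exact ⟨le_of_lt hgs, le_of_lt hgt⟩
    obtain ⟨c, hc1, hc2⟩ := intermediate_value_uIcc hc h0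
    exact ⟨c, hc1, hc2⟩
  have piece : ∀ a b : ℝ, a ∈ Icc 0 T → b ∈ Icc (0:ℝ) T → a ≤ b →
      ((∀ t ∈ Icc a b, 0 ≤ g t) ∨ (∀ t ∈ Icc a b, g t ≤ 0)) →
      (∫ t in a..b, |g t|) ≤ 2 := by
    intro a b ha hb hab hsg
    have h2 : |f b - f a| ≤ 2 := by
      have h3 := abs_le.1 (hbd a ha)
      have h4 := abs_le.1 (hbd b hb)
      rw [abs_le]; constructor <;> linarith
    rcases hsg with h | h
    · have he : (∫ t in a..b, |g t|) = ∫ t in a..b, g t := by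
        apply intervalIntegral.integral_congr
        intro t ht
        rw [uIcc_of_le hab] at ht
        exact abs_of_nonneg (h t ht)
      rw [he, hftc a b ha hb hab]
      exact le_trans (le_abs_self _) h2
    · have he : (∫ t in a..b, |g t|) = ∫ t in a..b, -g t := by
        apply intervalIntegral.integral_congr
        intro t ht
        rw [uIcc_of_le hab] at ht
        exact abs_of_nonpos (h t ht)
      rw [he, intervalIntegral.integral_neg, hftc a b ha hb hab]
      have := neg_abs_le (f b - f a)
      linarith
  by_cases hZ : (Icc 0 T ∩ g ⁻¹' {0}).Nonempty
  · -- there is a zero of g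
    set Z : Set ℝ := Icc 0 T ∩ g ⁻¹' {0} with hZdef
    have hZclosed : IsClosed Z :=
      hgc.preimage_isClosed_of_isClosed isClosed_Icc isClosed_singleton
    have hZbdd_below : BddBelow Z := ⟨0, fun x hx => hx.1.1⟩
    have hZbdd_above : BddAbove Z := ⟨T, fun x hx => hx.1.2⟩
    set z₁ := sInf Z with hz1def
    set z₂ := sSup Z with hz2def
    have hz1 : z₁ ∈ Z := hZclosed.csInf_mem hZ hZbdd_below
    have hz2 : z₂ ∈ Z := hZclosed.csSup_mem hZ hZbdd_above
    have hz12 : z₁ ≤ z₂ := csInf_le_csSup hZ hZbdd_below hZbdd_above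
    have hz1m : z₁ ∈ Icc (0:ℝ) T := hz1.1
    have hz2m : z₂ ∈ Icc (0:ℝ) T := hz2.1
    have hgz1 : g z₁ = 0 := hz1.2
    have hgz2 : g z₂ = 0 := hz2.2
    set m := (z₁ + z₂)/2 with hmdef
    have hz1m' : z₁ ≤ m := by simp only [hmdef]; linarith
    have hmz2 : m ≤ z₂ := by simp only [hmdef]; linarith
    have hmm : m ∈ Icc (0:ℝ) T := ⟨le_trans hz1m.1 hz1m', le_trans hmz2 hz2m.2⟩
    have h0m : (0:ℝ) ∈ Icc (0:ℝ) T := ⟨le_refl _, hT0⟩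
    have hTm : T ∈ Icc (0:ℝ) T := ⟨hT0, le_refl _⟩
    -- split integral
    have hsplit : (∫ t in (0:ℝ)..T, |g t|) =
        (∫ t in (0:ℝ)..z₁, |g t|) + (∫ t in z₁..m, |g t|) +
        (∫ t in m..z₂, |g t|) + (∫ t in z₂..T, |g t|) := by
      rw [integral_add_adjacent_intervals (habsint _ _ h0m hz1m) (habsint _ _ hz1m hmm),
        integral_add_adjacent_intervals
          ((habsint _ _ h0m hz1m).trans (habsint _ _ hz1m hmm)) (habsint _ _ hmm hz2m),
        integral_add_adjacent_intervals
          (((habsint _ _ h0m hz1m).trans (habsint _ _ hz1m hmm)).trans (habsint _ _ hmm hz2m))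
          (habsint _ _ hz2m hTm)]
    -- sign dichotomy on [0, z₁]
    have hdichA : (∀ t ∈ Icc (0:ℝ) z₁, 0 ≤ g t) ∨ (∀ t ∈ Icc (0:ℝ) z₁, g t ≤ 0) := by
      by_cases hpos : ∀ t ∈ Icc (0:ℝ) z₁, 0 ≤ g t
      · exact Or.inl hpos
      · right
        push_neg at hpos
        obtain ⟨s, hs, hgs⟩ := hpos
        intro t ht
        by_contra h
        push_neg at h
        have hsm : s ∈ Icc (0:ℝ) T := ⟨hs.1, le_trans hs.2 hz1m.2⟩
        have htm : t ∈ Icc (0:ℝ) T := ⟨ht.1, le_trans ht.2 hz1m.2⟩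
        obtain ⟨c, hc1, hc2⟩ := hivt s t hsm htm hgs h
        have hslt : s < z₁ := lt_of_le_of_ne hs.2 (fun he => by rw [he, hgz1] at hgs; linarith)
        have htlt : t < z₁ := lt_of_le_of_ne ht.2 (fun he => by rw [he, hgz1] at h; linarith)
        rw [mem_uIcc] at hc1
        have hcz : c < z₁ := by rcases hc1 with ⟨_, h2⟩ | ⟨_, h2⟩ <;> linarith
        have hc0 : 0 ≤ c := by rcases hc1 with ⟨h1, _⟩ | ⟨h1, _⟩ <;> linarith [hs.1, ht.1]
        have hcZ : c ∈ Z := ⟨⟨hc0, by linarith [hz1m.2]⟩, hc2⟩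
        exact absurd (csInf_le hZbdd_below hcZ) (not_le.2 hcz)
    -- sign dichotomy on [z₂, T]
    have hdichB : (∀ t ∈ Icc z₂ T, 0 ≤ g t) ∨ (∀ t ∈ Icc z₂ T, g t ≤ 0) := by
      by_cases hpos : ∀ t ∈ Icc z₂ T, 0 ≤ g t
      · exact Or.inl hpos
      · right
        push_neg at hpos
        obtain ⟨s, hs, hgs⟩ := hpos
        intro t ht
        by_contra h
        push_neg at h
        have hsm : s ∈ Icc (0:ℝ) T := ⟨le_trans hz2m.1 hs.1, hs.2⟩
        have htm : t ∈ Icc (0:ℝ) T := ⟨le_trans hz2m.1 ht.1, ht.2⟩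
        obtain ⟨c, hc1, hc2⟩ := hivt s t hsm htm hgs h
        have hslt : z₂ < s := lt_of_le_of_ne hs.1 (fun he => by rw [← he, hgz2] at hgs; linarith)
        have htlt : z₂ < t := lt_of_le_of_ne ht.1 (fun he => by rw [← he, hgz2] at h; linarith)
        rw [mem_uIcc] at hc1
        have hcz : z₂ < c := by rcases hc1 with ⟨h1, _⟩ | ⟨h1, _⟩ <;> linarith
        have hcT : c ≤ T := by rcases hc1 with ⟨_, h2⟩ | ⟨_, h2⟩ <;> linarith [hs.2, ht.2]
        have hcZ : c ∈ Z := ⟨⟨by linarith [hz2m.1], hcT⟩, hc2⟩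
        exact absurd (le_csSup hZbdd_above hcZ) (not_le.2 hcz)
    -- the four bounds
    have hA2 : (∫ t in (0:ℝ)..z₁, |g t|) ≤ 2 := piece 0 z₁ h0m hz1m hz1m.1 hdichA
    have hB2 : (∫ t in z₂..T, |g t|) ≤ 2 := piece z₂ T hz2m hTm hz2m.2 hdichB
    have hAa : (∫ t in (0:ℝ)..z₁, |g t|) ≤ z₁^2/2 := by
      have hmono : (∫ t in (0:ℝ)..z₁, |g t|) ≤ ∫ t in (0:ℝ)..z₁, (z₁ - t) := by
        apply integral_mono_on hz1m.1 (habsint _ _ h0m hz1m)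
          ((continuous_const.sub continuous_id).intervalIntegrable _ _)
        intro x hx
        have := hlip x ⟨hx.1, le_trans hx.2 hz1m.2⟩ z₁ hz1m
        rw [hgz1, sub_zero] at this
        calc |g x| ≤ |x - z₁| := this
          _ = z₁ - x := by rw [abs_sub_comm, abs_of_nonneg (by linarith [hx.2])]
      rw [integral_const_sub'] at hmono
      calc (∫ t in (0:ℝ)..z₁, |g t|) ≤ (z₁ - 0)^2/2 - (z₁ - z₁)^2/2 := hmono
        _ = z₁^2/2 := by ring
    have hM1 : (∫ t in z₁..m, |g t|) ≤ (m - z₁)^2/2 := by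
      have hmono : (∫ t in z₁..m, |g t|) ≤ ∫ t in z₁..m, (t - z₁) := by
        apply integral_mono_on hz1m' (habsint _ _ hz1m hmm)
          ((continuous_id.sub continuous_const).intervalIntegrable _ _)
        intro x hx
        have := hlip x ⟨le_trans hz1m.1 hx.1, le_trans hx.2 hmm.2⟩ z₁ hz1m
        rw [hgz1, sub_zero] at this
        calc |g x| ≤ |x - z₁| := this
          _ = x - z₁ := abs_of_nonneg (by linarith [hx.1])
      rw [integral_sub_const'] at hmono
      calc (∫ t in z₁..m, |g t|) ≤ (m - z₁)^2/2 - (z₁ - z₁)^2/2 := hmono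
        _ = (m - z₁)^2/2 := by ring
    have hM2 : (∫ t in m..z₂, |g t|) ≤ (z₂ - m)^2/2 := by
      have hmono : (∫ t in m..z₂, |g t|) ≤ ∫ t in m..z₂, (z₂ - t) := by
        apply integral_mono_on hmz2 (habsint _ _ hmm hz2m)
          ((continuous_const.sub continuous_id).intervalIntegrable _ _)
        intro x hx
        have := hlip x ⟨le_trans hmm.1 hx.1, le_trans hx.2 hz2m.2⟩ z₂ hz2m
        rw [hgz2, sub_zero] at this
        calc |g x| ≤ |x - z₂| := this
          _ = z₂ - x := by rw [abs_sub_comm, abs_of_nonneg (by linarith [hx.2])]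
      rw [integral_const_sub'] at hmono
      calc (∫ t in m..z₂, |g t|) ≤ (z₂ - m)^2/2 - (z₂ - z₂)^2/2 := hmono
        _ = (z₂ - m)^2/2 := by ring
    have hBb : (∫ t in z₂..T, |g t|) ≤ (T - z₂)^2/2 := by
      have hmono : (∫ t in z₂..T, |g t|) ≤ ∫ t in z₂..T, (t - z₂) := by
        apply integral_mono_on hz2m.2 (habsint _ _ hz2m hTm)
          ((continuous_id.sub continuous_const).intervalIntegrable _ _)
        intro x hx
        have := hlip x ⟨le_trans hz2m.1 hx.1, hx.2⟩ z₂ hz2m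
        rw [hgz2, sub_zero] at this
        calc |g x| ≤ |x - z₂| := this
          _ = x - z₂ := abs_of_nonneg (by linarith [hx.1])
      rw [integral_sub_const'] at hmono
      calc (∫ t in z₂..T, |g t|) ≤ (T - z₂)^2/2 - (z₂ - z₂)^2/2 := hmono
        _ = (T - z₂)^2/2 := by ring
    -- combine
    rw [hsplit]
    have hmeq1 : m - z₁ = (z₂ - z₁)/2 := by simp only [hmdef]; ring
    have hmeq2 : z₂ - m = (z₂ - z₁)/2 := by simp only [hmdef]; ring
    have hM : (∫ t in z₁..m, |g t|) + (∫ t in m..z₂, |g t|) ≤ (z₂ - z₁)^2/4 := by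
      rw [hmeq1] at hM1; rw [hmeq2] at hM2
      have : ((z₂ - z₁)/2)^2/2 + ((z₂ - z₁)/2)^2/2 = (z₂ - z₁)^2/4 := by ring
      linarith
    have := arith_ineq T z₁ (z₂ - z₁) (T - z₂)
      (∫ t in (0:ℝ)..z₁, |g t|)
      ((∫ t in z₁..m, |g t|) + (∫ t in m..z₂, |g t|))
      (∫ t in z₂..T, |g t|)
      hz1m.1 (by linarith) (by linarith [hz2m.2]) (by ring) hT2 hT4
      hA2 hAa hM hB2 hBb
    linarith
  · -- no zero: g has constant sign on [0,T]
    have hne : ∀ t ∈ Icc (0:ℝ) T, g t ≠ 0 := by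
      intro t ht h
      exact hZ ⟨t, ht, h⟩
    have hdich : (∀ t ∈ Icc (0:ℝ) T, 0 ≤ g t) ∨ (∀ t ∈ Icc (0:ℝ) T, g t ≤ 0) := by
      by_cases hpos : ∀ t ∈ Icc (0:ℝ) T, 0 ≤ g t
      · exact Or.inl hpos
      · right
        push_neg at hpos
        obtain ⟨s, hs, hgs⟩ := hpos
        intro t ht
        by_contra h
        push_neg at h
        obtain ⟨c, hc1, hc2⟩ := hivt s t hs ht hgs h
        rw [mem_uIcc] at hc1
        have hcm : c ∈ Icc (0:ℝ) T := by
          rcases hc1 with ⟨h1, h2⟩ | ⟨h1, h2⟩ <;>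
            exact ⟨by linarith [hs.1, ht.1], by linarith [hs.2, ht.2]⟩
        exact hne c hcm hc2
    have := piece 0 T ⟨le_refl _, hT0⟩ ⟨hT0, le_refl _⟩ hT0 hdich
    nlinarith [sq_nonneg (T - 2)]


private lemma witness_mem (T : ℝ) (hT2 : 2 ≤ T) (hT4 : T ≤ 4) :
    (∀ t ∈ Icc (0:ℝ) T, HasDerivWithinAt (fun t => -1 + (t - 2) ^ 2 / 2) (t - 2) (Icc 0 T) t) ∧
    (∀ t ∈ Icc (0:ℝ) T, |(-1 + (t - 2) ^ 2 / 2 : ℝ)| ≤ 1) ∧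
    LipschitzOnWith 1 (fun t : ℝ => t - 2) (Icc 0 T) := by
  refine ⟨?_, ?_, ?_⟩
  · intro t ht
    have h : HasDerivAt (fun y : ℝ => -1 + (y - 2) ^ 2 / 2) ((2 * (t - 2) ^ 1 * 1) / 2) t :=
      ((((hasDerivAt_id t).sub_const 2).pow 2).div_const 2).const_add (-1)
    have h' : (2 * (t - 2) ^ 1 * 1) / 2 = t - 2 := by ring
    rw [h'] at h
    exact h.hasDerivWithinAt
  · intro t ht
    rw [abs_le]
    constructor
    · nlinarith [sq_nonneg (t - 2)]
    · nlinarith [ht.1, ht.2, hT4]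
  · rw [lipschitzOnWith_iff_dist_le_mul]
    intro x _ y _
    simp only [Real.dist_eq, NNReal.coe_one, one_mul]
    exact le_of_eq (by ring_nf)

private lemma witness_val (T : ℝ) (hT2 : 2 ≤ T) :
    (∫ t in (0:ℝ)..T, |t - 2|) = T ^ 2 / 2 - 2 * T + 4 := by
  have hi1 : IntervalIntegrable (fun t : ℝ => |t - 2|) volume 0 2 :=
    ((continuous_id.sub continuous_const).abs).intervalIntegrable _ _
  have hi2 : IntervalIntegrable (fun t : ℝ => |t - 2|) volume 2 T :=
    ((continuous_id.sub continuous_const).abs).intervalIntegrable _ _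
  rw [← integral_add_adjacent_intervals hi1 hi2]
  have h1 : (∫ t in (0:ℝ)..2, |t - 2|) = ∫ t in (0:ℝ)..2, (2 - t) := by
    apply intervalIntegral.integral_congr
    intro t ht
    rw [uIcc_of_le (by norm_num : (0:ℝ) ≤ 2)] at ht
    show |t - 2| = 2 - t
    rw [abs_sub_comm, abs_of_nonneg (by linarith [ht.2])]
  have h2 : (∫ t in (2:ℝ)..T, |t - 2|) = ∫ t in (2:ℝ)..T, (t - 2) := by
    apply intervalIntegral.integral_congr
    intro t ht
    rw [uIcc_of_le hT2] at ht
    show |t - 2| = t - 2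
    rw [abs_of_nonneg (by linarith [ht.1])]
  rw [h1, h2, integral_const_sub', integral_sub_const']
  ring

/-- For `2 ≤ T ≤ 4`, the supremum of the total variation
`∫₀ᵀ |f'(t)| dt` over `f ∈ 𝓛₂(T)` equals `T²/2 - 2T + 4`, attained by
`f(t) = -1 + (t-2)²/2`. -/
theorem total_variation_sup_medium_T (T : ℝ) (hT2 : 2 ≤ T) (hT4 : T ≤ 4) :
    IsGreatest {y : ℝ | ∃ f f' : ℝ → ℝ, InL2 T f f' ∧
        y = ∫ t in (0:ℝ)..T, |f' t|} (T ^ 2 / 2 - 2 * T + 4) ∧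
    InL2 T (fun t => -1 + (t - 2) ^ 2 / 2) (fun t => t - 2) ∧
    (∫ t in (0:ℝ)..T, |t - 2|) = T ^ 2 / 2 - 2 * T + 4 := by
  obtain ⟨hw1, hw2, hw3⟩ := witness_mem T hT2 hT4
  have hmem : InL2 T (fun t => -1 + (t - 2) ^ 2 / 2) (fun t => t - 2) := ⟨hw1, hw2, hw3⟩
  have hval := witness_val T hT2
  refine ⟨⟨⟨_, _, hmem, hval.symm⟩, ?_⟩, hmem, hval⟩
  rintro y ⟨f, f', ⟨hd, hb, hl⟩, rfl⟩
  exact upper_bound T hT2 hT4 f f' hd hb hl
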